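/- Let n ≥ 3 and k be positive integers with k ≤ n − ⌈n/3⌉. Then the k-synchronous bondage number of the cycle on n vertices is: Sb_k(C_n) = ⌊(3k−1)/2⌋ + 1 if n ≡ 0 (mod 3); Sb_k(C_n) = ⌊(3k+1)/2⌋ + 1 if n ≡ 1 (mod 3); and Sb_k(C_n) = ⌈(3k−1)/2⌉ + 1 if n ≡ 2 (mod 3). -/

import Mathlib

/-- A finite set of vertices `D` is a dominating set of `G` if every vertex
is in `D` or adjacent to a vertex in `D`. -/
def SimpleGraph.IsDominatingSet {V : Type*} (G : SimpleGraph V) (D : Finset V) : Prop :=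
  ∀ v : V, v ∈ D ∨ ∃ u ∈ D, G.Adj u v

/-- The domination number of `G`: the minimum cardinality of a dominating set. -/
noncomputable def SimpleGraph.domNum {V : Type*} (G : SimpleGraph V) : ℕ :=
  sInf {n : ℕ | ∃ D : Finset V, G.IsDominatingSet D ∧ D.card = n}

/-- The `k`-synchronous bondage number of `G`: the minimum cardinality of a set of edges
whose deletion increases the domination number by exactly `k`.  (`Sb 1` is the classical
bondage number.) -/
noncomputable def SimpleGraph.synchBondage {V : Type*} (G : SimpleGraph V) (k : ℕ) : ℕ :=
  sInf {m : ℕ | ∃ E' : Finset (Sym2 V), ↑E' ⊆ G.edgeSet ∧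
    (G.deleteEdges ↑E').domNum = G.domNum + k ∧ E'.card = m}

open SimpleGraph Finset
open scoped Fin.NatCast Fin.CommRing

lemma domNum_exists {V : Type*} [Fintype V] (G : SimpleGraph V) :
    ∃ D : Finset V, G.IsDominatingSet D ∧ D.card = G.domNum :=
  Nat.sInf_mem (⟨Finset.univ.card, Finset.univ, fun v => Or.inl (mem_univ v), rfl⟩ :
    Set.Nonempty {n : ℕ | ∃ D : Finset V, G.IsDominatingSet D ∧ D.card = n})

lemma domNum_le {V : Type*} (G : SimpleGraph V) {D : Finset V} (h : G.IsDominatingSet D) :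
    G.domNum ≤ D.card := Nat.sInf_le ⟨D, h, rfl⟩

section cyc

variable {n : ℕ} [NeZero n]

lemma val_one3 (hn : 3 ≤ n) : (1 : Fin n).val = 1 := by
  rw [Fin.val_one']; exact Nat.mod_eq_of_lt (by omega)

lemma val_two3 (hn : 3 ≤ n) : (1 + 1 : Fin n).val = 2 := by
  rw [Fin.val_add, val_one3 hn]; exact Nat.mod_eq_of_lt (by omega)

lemma cycle_adj (hn : 3 ≤ n) {u v : Fin n} :
    (cycleGraph n).Adj u v ↔ u = v + 1 ∨ v = u + 1 := by
  rw [cycleGraph_adj']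
  constructor
  · rintro (h | h)
    · left
      have h2 : u - v = 1 := Fin.ext (by rw [h, val_one3 hn])
      rw [sub_eq_iff_eq_add] at h2
      exact h2.trans (add_comm _ _)
    · right
      have h2 : v - u = 1 := Fin.ext (by rw [h, val_one3 hn])
      rw [sub_eq_iff_eq_add] at h2
      exact h2.trans (add_comm _ _)
  · rintro (h | h)
    · left; rw [h, add_sub_cancel_left, val_one3 hn]
    · right; rw [h, add_sub_cancel_left, val_one3 hn]

lemma add_one_ne (hn : 3 ≤ n) (v : Fin n) : v + 1 ≠ v := by
  intro h
  have h2 : (1 : Fin n) = 0 := by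
    have := h.trans (add_zero v).symm
    exact add_left_cancel this
  have h3 := val_one3 (n := n) hn
  rw [h2] at h3
  simp at h3

lemma add_two_ne (hn : 3 ≤ n) (v : Fin n) : v + 1 + 1 ≠ v := by
  intro h
  have h2 : (1 + 1 : Fin n) = 0 := by
    have : v + (1 + 1) = v + 0 := by rw [add_zero, ← add_assoc]; exact h
    exact add_left_cancel this
  have h3 := val_two3 (n := n) hn
  rw [h2] at h3
  simp at h3

lemma edge_inj (hn : 3 ≤ n) {i j : Fin n} (h : s(i, i + 1) = s(j, j + 1)) : i = j := by
  rw [Sym2.eq_iff] at h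
  rcases h with ⟨h1, _⟩ | ⟨h1, h2⟩
  · exact h1
  · exact absurd (by rw [h2]; exact h1.symm) (add_two_ne hn i)

lemma edge_mem (hn : 3 ≤ n) (i : Fin n) : s(i, i + 1) ∈ (cycleGraph n).edgeSet := by
  rw [SimpleGraph.mem_edgeSet, cycle_adj hn]
  right; rfl

end cyc
open SimpleGraph Finset

section pos
variable {n : ℕ} [NeZero n] (S : Finset (Fin n))

lemma exP (hS : S.Nonempty) (v : Fin n) : ∃ j : ℕ, v - ((j : Fin n) + 1) ∈ S := by
  obtain ⟨s, hs⟩ := hS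
  refine ⟨(v - s - 1).val, ?_⟩
  rw [Fin.cast_val_eq_self]
  have : v - (v - s - 1 + 1) = s := by ring
  rw [this]; exact hs

noncomputable def posF (hS : S.Nonempty) (v : Fin n) : ℕ := Nat.find (exP S hS v)

lemma posF_spec (hS : S.Nonempty) (v : Fin n) : v - ((posF S hS v : Fin n) + 1) ∈ S :=
  Nat.find_spec (exP S hS v)

lemma posF_zero_iff (hS : S.Nonempty) (v : Fin n) : posF S hS v = 0 ↔ v - 1 ∈ S := by
  rw [posF, Nat.find_eq_zero]
  simp

lemma posF_succ (hS : S.Nonempty) {v : Fin n} (hv : v ∉ S) :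
    posF S hS (v + 1) = posF S hS v + 1 := by
  apply le_antisymm
  · apply Nat.find_le
    push_cast
    have : v + 1 - ((posF S hS v : Fin n) + 1 + 1) = v - ((posF S hS v : Fin n) + 1) := by ring
    rw [this]; exact posF_spec S hS v
  · refine (Nat.le_find_iff _ _).mpr ?_
    intro m hm
    match m with
    | 0 => simpa using hv
    | j + 1 =>
      have hj : j < posF S hS v := by omega
      have := Nat.find_min (exP S hS v) hj
      push_cast
      have he : v + 1 - ((j : Fin n) + 1 + 1) = v - ((j : Fin n) + 1) := by ring
      rw [he]
      exact this

lemma posF_pred (hS : S.Nonempty) {v : Fin n} (hv : 1 ≤ posF S hS v) :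
    v - 1 ∉ S ∧ posF S hS (v - 1) + 1 = posF S hS v := by
  have h1 : v - 1 ∉ S := fun h => by
    have := (posF_zero_iff S hS v).mpr h; omega
  refine ⟨h1, ?_⟩
  have := posF_succ S hS h1
  rw [sub_add_cancel] at this
  omega

end pos

section cut
variable {n : ℕ} [NeZero n] (S : Finset (Fin n))

def cutGraph : SimpleGraph (Fin n) :=
  (SimpleGraph.cycleGraph n).deleteEdges ↑(S.image (fun i => s(i, i + 1)))

lemma cutGraph_adj (hn : 3 ≤ n) {u v : Fin n} :
    (cutGraph S).Adj u v ↔ (v = u + 1 ∧ u ∉ S) ∨ (u = v + 1 ∧ v ∉ S) := by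
  rw [cutGraph, SimpleGraph.deleteEdges_adj, cycle_adj hn]
  constructor
  · rintro ⟨h | h, hmem⟩
    · refine Or.inr ⟨h, fun hv => hmem ?_⟩
      simp only [coe_image, Set.mem_image, mem_coe]
      exact ⟨v, hv, by rw [h, Sym2.eq_swap]⟩
    · refine Or.inl ⟨h, fun hu => hmem ?_⟩
      simp only [coe_image, Set.mem_image, mem_coe]
      exact ⟨u, hu, by rw [h]⟩
  · rintro (⟨h, hu⟩ | ⟨h, hv⟩)
    · refine ⟨Or.inr h, fun hmem => ?_⟩
      simp only [coe_image, Set.mem_image, mem_coe] at hmem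
      obtain ⟨i, hi, he⟩ := hmem
      rw [h] at he
      exact hu (edge_inj hn he ▸ hi)
    · refine ⟨Or.inl h, fun hmem => ?_⟩
      simp only [coe_image, Set.mem_image, mem_coe] at hmem
      obtain ⟨i, hi, he⟩ := hmem
      rw [h, show s(v + 1, v) = s(v, v + 1) from Sym2.eq_swap] at he
      exact hv (edge_inj hn he ▸ hi)

/-- The constructed dominating set for the cut cycle. -/
noncomputable def domD (hS : S.Nonempty) : Finset (Fin n) :=
  univ.filter (fun v => posF S hS v % 3 = 1 ∨ (v ∈ S ∧ posF S hS v % 3 = 0))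

lemma domD_dominates (hn : 3 ≤ n) (hS : S.Nonempty) :
    (cutGraph S).IsDominatingSet (domD S hS) := by
  intro v
  have h3 : posF S hS v % 3 = 0 ∨ posF S hS v % 3 = 1 ∨ posF S hS v % 3 = 2 := by omega
  rcases h3 with h3 | h3 | h3
  · by_cases hv : v ∈ S
    · exact Or.inl (mem_filter.mpr ⟨mem_univ v, Or.inr ⟨hv, h3⟩⟩)
    · refine Or.inr ⟨v + 1, mem_filter.mpr ⟨mem_univ _, Or.inl ?_⟩, ?_⟩
      · rw [posF_succ S hS hv]; omega
      · rw [cutGraph_adj S hn]; exact Or.inr ⟨rfl, hv⟩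
  · exact Or.inl (mem_filter.mpr ⟨mem_univ v, Or.inl h3⟩)
  · obtain ⟨hns, hp⟩ := posF_pred S hS (v := v) (by omega)
    refine Or.inr ⟨v - 1, mem_filter.mpr ⟨mem_univ _, Or.inl (by omega)⟩, ?_⟩
    rw [cutGraph_adj S hn]
    exact Or.inl ⟨(sub_add_cancel v 1).symm, hns⟩

end cut

section count
variable {n : ℕ} [NeZero n] (S : Finset (Fin n))

lemma domD_card (hn : 3 ≤ n) (hS : S.Nonempty) :
    (domD S hS).card * 3 ≤ n + S.card * 2 := by
  classical
  set D := domD S hS with hD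
  set pos := posF S hS with hposdef
  have memD : ∀ v, v ∈ D ↔ (pos v % 3 = 1 ∨ (v ∈ S ∧ pos v % 3 = 0)) := by
    intro v; rw [hD, domD, mem_filter]; simp [hposdef]
  set f : Fin n × ℕ → Fin n ⊕ (Fin n × Fin 2) := fun p =>
    if p.2 = 1 then Sum.inl p.1
    else if p.2 = 0 then
      (if p.1 ∈ S ∧ pos p.1 % 3 = 0 then Sum.inr (p.1, 0) else Sum.inl (p.1 - 1))
    else (if p.1 ∈ S then Sum.inr (p.1, 1) else Sum.inl (p.1 + 1)) with hf
  -- class facts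
  have clsA : ∀ v ∈ D, ¬(v ∈ S ∧ pos v % 3 = 0) → pos v % 3 = 1 := by
    intro v hv hnb
    rcases (memD v).mp hv with h | h
    · exact h
    · exact absurd h hnb
  have cls0 : ∀ v ∈ D, ¬(v ∈ S ∧ pos v % 3 = 0) → pos (v - 1) % 3 = 0 ∧ v - 1 ∉ S := by
    intro v hv hnb
    have h1 := clsA v hv hnb
    have h2 : 1 ≤ posF S hS v := by rw [← hposdef]; omega
    obtain ⟨hns, hpp⟩ := posF_pred S hS h2
    rw [← hposdef] at hpp
    exact ⟨by omega, hns⟩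
  have cls2 : ∀ v ∈ D, v ∉ S → pos (v + 1) % 3 = 2 := by
    intro v hv hns
    have h1 := clsA v hv (fun h => hns h.1)
    have := posF_succ S hS hns
    rw [← hposdef] at this
    omega
  have hmaps : ∀ p ∈ D ×ˢ Finset.range 3,
      f p ∈ (univ : Finset (Fin n)).disjSum (S ×ˢ (univ : Finset (Fin 2))) := by
    rintro ⟨v, i⟩ hp
    rw [hf]
    dsimp only
    split_ifs with h1 h2 h3 h4 <;>
      simp_all [Finset.mem_disjSum, Finset.mem_product]
  have hinj : Set.InjOn f ↑(D ×ˢ Finset.range 3) := by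
    rintro ⟨v, i⟩ hv ⟨w, j⟩ hw heq
    simp only [coe_product, Set.mem_prod, mem_coe, Finset.mem_range] at hv hw
    obtain ⟨hvD, hi⟩ := hv
    obtain ⟨hwD, hj⟩ := hw
    rw [hf] at heq
    dsimp only at heq
    suffices hgoal : v = w ∧ i = j by rw [hgoal.1, hgoal.2]
    interval_cases i <;> interval_cases j <;> norm_num at heq
    · -- (0,0)
      split_ifs at heq with h1 h2 h3 <;> simp at heq
      · exact ⟨heq, rfl⟩
      · exact ⟨heq, rfl⟩
    · -- (0,1)
      split_ifs at heq with h1 <;> simp at heq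
      exfalso
      have c := cls0 v hvD h1
      rcases (memD w).mp hwD with hw1 | ⟨hwS, _⟩
      · rw [heq] at c; omega
      · exact c.2 (heq ▸ hwS)
    · -- (0,2)
      split_ifs at heq with h1 h2 h3 <;> simp at heq
      exfalso
      have c := cls0 v hvD h1
      have c2 := cls2 w hwD h3
      rw [heq] at c
      omega
    · -- (1,0)
      split_ifs at heq with h1 <;> simp at heq
      exfalso
      have c := cls0 w hwD h1
      rcases (memD v).mp hvD with hv1 | ⟨hvS, _⟩
      · rw [← heq] at c; omega
      · exact c.2 (heq ▸ hvS)
    · -- (1,1)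
      exact ⟨heq, rfl⟩
    · -- (1,2)
      split_ifs at heq with h1 <;> simp at heq
      exfalso
      have c2 := cls2 w hwD h1
      rw [← heq] at c2
      rcases (memD v).mp hvD with hv1 | ⟨_, hv1⟩ <;> omega
    · -- (2,0)
      split_ifs at heq with h1 h2 h3 <;> simp at heq
      exfalso
      have c2 := cls2 v hvD h1
      have c := cls0 w hwD h3
      rw [heq] at c2
      omega
    · -- (2,1)
      split_ifs at heq with h1 <;> simp at heq
      exfalso
      have c2 := cls2 v hvD h1
      rw [heq] at c2
      rcases (memD w).mp hwD with hw1 | ⟨_, hw1⟩ <;> omega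
    · -- (2,2)
      split_ifs at heq with h1 h2 h3 <;> simp at heq
      · exact ⟨heq, rfl⟩
      · exact ⟨heq, rfl⟩
  have hle := Finset.card_le_card_of_injOn f hmaps hinj
  rw [Finset.card_product, Finset.card_range, Finset.card_disjSum, Finset.card_product] at hle
  simpa using hle

end count

section gamma

lemma card_filter_val {n : ℕ} (p : ℕ → Prop) [DecidablePred p] :
    ((univ : Finset (Fin n)).filter (fun v => p v.val)).card =
      ((Finset.range n).filter p).card := by
  apply Finset.card_bij (fun v _ => v.val)
  · intro a ha
    simp only [mem_filter, mem_univ, true_and] at ha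
    simp only [mem_filter, Finset.mem_range]
    exact ⟨a.is_lt, ha⟩
  · intro a _ b _ h
    exact Fin.ext h
  · intro b hb
    simp only [mem_filter, Finset.mem_range] at hb
    exact ⟨⟨b, hb.1⟩, by simp [hb.2], rfl⟩

lemma card_range_mod3 (n : ℕ) :
    ((Finset.range n).filter (fun x => x % 3 = 0)).card = (n + 2) / 3 := by
  induction n with
  | zero => simp
  | succ m ih =>
    rw [Finset.range_add_one, Finset.filter_insert]
    by_cases h : m % 3 = 0
    · rw [if_pos h, Finset.card_insert_of_notMem (by simp)]
      omega
    · rw [if_neg h]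
      omega

variable {n : ℕ} [NeZero n]

lemma val_sub_one (hn : 3 ≤ n) {v : Fin n} (h : 1 ≤ v.val) : (v - 1).val = v.val - 1 := by
  rw [Fin.sub_def, val_one3 hn]
  have h2 : n - 1 + v.val = (v.val - 1) + n := by omega
  show (n - 1 + v.val) % n = v.val - 1
  rw [h2, Nat.add_mod_right]
  exact Nat.mod_eq_of_lt (by omega)

lemma val_add_one (hn : 3 ≤ n) (v : Fin n) :
    (v + 1).val = if v.val = n - 1 then 0 else v.val + 1 := by
  rw [Fin.val_add, val_one3 hn]
  split_ifs with h
  · rw [h]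
    have : n - 1 + 1 = n := by omega
    rw [this, Nat.mod_self]
  · exact Nat.mod_eq_of_lt (by omega)

lemma domNum_cycle (hn : 3 ≤ n) : (SimpleGraph.cycleGraph n).domNum = (n + 2) / 3 := by
  apply le_antisymm
  · have hdom : (SimpleGraph.cycleGraph n).IsDominatingSet
        ((univ : Finset (Fin n)).filter (fun v => v.val % 3 = 0)) := by
      intro v
      have h3 : v.val % 3 = 0 ∨ v.val % 3 = 1 ∨ v.val % 3 = 2 := by omega
      rcases h3 with h3 | h3 | h3
      · exact Or.inl (mem_filter.mpr ⟨mem_univ v, h3⟩)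
      · refine Or.inr ⟨v - 1, mem_filter.mpr ⟨mem_univ _, ?_⟩, ?_⟩
        · rw [val_sub_one hn (by omega)]; omega
        · rw [cycle_adj hn]; exact Or.inr (sub_add_cancel v 1).symm
      · refine Or.inr ⟨v + 1, mem_filter.mpr ⟨mem_univ _, ?_⟩, ?_⟩
        · rw [val_add_one hn v]
          split_ifs <;> omega
        · rw [cycle_adj hn]; exact Or.inl rfl
    have := domNum_le _ hdom
    rwa [card_filter_val (fun x => x % 3 = 0), card_range_mod3] at this
  · obtain ⟨D, hdom, hcard⟩ := domNum_exists (SimpleGraph.cycleGraph n)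
    have hsub : (univ : Finset (Fin n)) ⊆ D.biUnion (fun u => {u - 1, u, u + 1}) := by
      intro v _
      rw [Finset.mem_biUnion]
      rcases hdom v with hv | ⟨u, hu, hadj⟩
      · exact ⟨v, hv, by simp⟩
      · refine ⟨u, hu, ?_⟩
        rw [cycle_adj hn] at hadj
        rcases hadj with h | h
        · have : v = u - 1 := by rw [h]; ring
          simp [this]
        · simp [h]
    have h1 := Finset.card_le_card hsub
    have h2 : (D.biUnion (fun u => {u - 1, u, u + 1})).card ≤ 3 * D.card := by
      apply le_trans (Finset.card_biUnion_le)
      apply le_trans (Finset.sum_le_card_nsmul D _ 3 ?_)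
      · simp [mul_comm]
      · intro u _
        apply le_trans (Finset.card_insert_le _ _)
        simp [Finset.card_insert_le]
        have := Finset.card_insert_le u ({u + 1} : Finset (Fin n))
        simp at this ⊢
        omega
    rw [Finset.card_univ, Fintype.card_fin] at h1
    omega

end gamma

section construction
variable {n : ℕ} [NeZero n]

lemma card_biUnion3 (T : Finset (Fin n)) :
    (T.biUnion (fun u => {u - 1, u, u + 1})).card ≤ 3 * T.card := by
  apply le_trans (Finset.card_biUnion_le)
  apply le_trans (Finset.sum_le_card_nsmul T _ 3 ?_)
  · simp [mul_comm]
  · intro u _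
    apply le_trans (Finset.card_insert_le _ _)
    have := Finset.card_insert_le u ({u + 1} : Finset (Fin n))
    simp at this ⊢
    omega

def S0 (n m₀ : ℕ) [NeZero n] : Finset (Fin n) := univ.filter (fun v => v.val < m₀)

lemma S0_card {m₀ : ℕ} (hmn : m₀ ≤ n) : (S0 n m₀).card = m₀ := by
  rw [S0, card_filter_val (fun x => x < m₀)]
  have h : (Finset.range n).filter (fun x => x < m₀) = Finset.range m₀ := by
    ext a
    simp only [mem_filter, Finset.mem_range]
    omega
  rw [h, Finset.card_range]

lemma S0_nonempty {m₀ : ℕ} (hm : 1 ≤ m₀) : (S0 n m₀).Nonempty := by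
  refine ⟨0, ?_⟩
  simp only [S0, mem_filter, mem_univ, true_and]
  rw [Fin.val_zero]
  omega

lemma cut_upper_S0 {m₀ : ℕ} (hn : 3 ≤ n) (hm : 1 ≤ m₀) (hmn : m₀ ≤ n) :
    (cutGraph (S0 n m₀)).domNum * 3 ≤ n + 2 * m₀ := by
  have h1 := domNum_le _ (domD_dominates (S0 n m₀) hn (S0_nonempty hm))
  have h2 := domD_card (S0 n m₀) hn (S0_nonempty hm)
  rw [S0_card hmn] at h2
  omega

lemma cut_lower_S0 {m₀ : ℕ} (hn : 3 ≤ n) (hm2 : 2 ≤ m₀) (hmn : m₀ ≤ n) :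
    (m₀ - 1) + (n - m₀ + 3) / 3 ≤ (cutGraph (S0 n m₀)).domNum := by
  obtain ⟨D, hdom, hcard⟩ := domNum_exists (cutGraph (S0 n m₀))
  set Iso := (univ : Finset (Fin n)).filter (fun v => 1 ≤ v.val ∧ v.val < m₀) with hIsoDef
  set Pa := (univ : Finset (Fin n)).filter (fun v => v.val = 0 ∨ m₀ ≤ v.val) with hPaDef
  have hmemS : ∀ v : Fin n, v ∈ S0 n m₀ ↔ v.val < m₀ := by
    intro v; simp [S0]
  have hIso : Iso ⊆ D := by
    intro v hv
    simp only [hIsoDef, mem_filter, mem_univ, true_and] at hv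
    rcases hdom v with h | ⟨u, hu, hadj⟩
    · exact h
    · exfalso
      rw [cutGraph_adj _ hn] at hadj
      rcases hadj with ⟨h1, h2⟩ | ⟨h1, h2⟩
      · apply h2
        rw [hmemS]
        have hu1 : u = v - 1 := by rw [h1]; ring
        rw [hu1, val_sub_one hn (by omega)]
        omega
      · exact h2 ((hmemS v).mpr hv.2)
  have hPa : ∀ v ∈ Pa, ∀ u, (cutGraph (S0 n m₀)).Adj u v → u ∈ Pa := by
    intro v hv u hadj
    simp only [hPaDef, mem_filter, mem_univ, true_and] at hv ⊢
    rw [cutGraph_adj _ hn] at hadj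
    rcases hadj with ⟨h1, h2⟩ | ⟨h1, h2⟩
    · rw [hmemS] at h2
      omega
    · rw [hmemS] at h2
      rw [h1, val_add_one hn v]
      split_ifs with h <;> omega
  have hPsub : Pa ⊆ (D ∩ Pa).biUnion (fun u => {u - 1, u, u + 1}) := by
    intro v hv
    rw [Finset.mem_biUnion]
    rcases hdom v with h | ⟨u, hu, hadj⟩
    · exact ⟨v, Finset.mem_inter.mpr ⟨h, hv⟩, by simp⟩
    · refine ⟨u, Finset.mem_inter.mpr ⟨hu, hPa v hv u hadj⟩, ?_⟩
      rw [cutGraph_adj _ hn] at hadj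
      rcases hadj with ⟨h1, _⟩ | ⟨h1, _⟩
      · simp [h1]
      · have hv1 : v = u - 1 := by rw [h1]; ring
        simp [hv1]
  have hPcard : Pa.card = n - m₀ + 1 := by
    rw [hPaDef, card_filter_val (fun x => x = 0 ∨ m₀ ≤ x)]
    have h : (Finset.range n).filter (fun x => x = 0 ∨ m₀ ≤ x) =
        insert 0 (Finset.Ico m₀ n) := by
      ext a
      simp only [mem_filter, Finset.mem_range, Finset.mem_insert, Finset.mem_Ico]
      omega
    rw [h, Finset.card_insert_of_notMem (by simp only [Finset.mem_Ico]; omega), Nat.card_Ico]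
  have hIcard : Iso.card = m₀ - 1 := by
    rw [hIsoDef, card_filter_val (fun x => 1 ≤ x ∧ x < m₀)]
    have h : (Finset.range n).filter (fun x => 1 ≤ x ∧ x < m₀) = Finset.Ico 1 m₀ := by
      ext a
      simp only [mem_filter, Finset.mem_range, Finset.mem_Ico]
      omega
    rw [h, Nat.card_Ico]
  have h3 : Pa.card ≤ 3 * (D ∩ Pa).card :=
    le_trans (Finset.card_le_card hPsub) (card_biUnion3 _)
  have hdisj : Disjoint Iso (D ∩ Pa) := by
    rw [Finset.disjoint_left]
    intro a ha hb
    simp only [hIsoDef, mem_filter, mem_univ, true_and] at ha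
    have := (Finset.mem_inter.mp hb).2
    simp only [hPaDef, mem_filter, mem_univ, true_and] at this
    omega
  have hunion : Iso ∪ (D ∩ Pa) ⊆ D := by
    intro a ha
    rcases Finset.mem_union.mp ha with h | h
    · exact hIso h
    · exact (Finset.mem_inter.mp h).1
  have h4 := Finset.card_le_card hunion
  rw [Finset.card_union_of_disjoint hdisj] at h4
  omega

end construction

section assembly
variable {n : ℕ} [NeZero n]

lemma edgeSet_cycle (hn : 3 ≤ n) {e : Sym2 (Fin n)}
    (he : e ∈ (SimpleGraph.cycleGraph n).edgeSet) : ∃ i : Fin n, e = s(i, i + 1) := by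
  induction e with
  | _ a b =>
    rw [SimpleGraph.mem_edgeSet, cycle_adj hn] at he
    rcases he with h | h
    · exact ⟨b, by rw [h, Sym2.eq_swap]⟩
    · exact ⟨a, by rw [h]⟩

lemma synch_eq (k m₀ : ℕ) (hn : 3 ≤ n) (hk : 1 ≤ k) (hm2 : 2 ≤ m₀) (hmn : m₀ ≤ n)
    (ha1 : (n + 2 * m₀) / 3 = (n + 2) / 3 + k)
    (ha2 : (n + 2) / 3 + k ≤ (m₀ - 1) + (n - m₀ + 3) / 3)
    (ha3 : ∀ m, 1 ≤ m → m < m₀ → (n + 2 * m) / 3 < (n + 2) / 3 + k) :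
    (SimpleGraph.cycleGraph n).synchBondage k = m₀ := by
  classical
  set G := SimpleGraph.cycleGraph n with hG
  set E0 : Finset (Sym2 (Fin n)) := (S0 n m₀).image (fun i => s(i, i + 1)) with hE0
  have hE0sub : ↑E0 ⊆ G.edgeSet := by
    intro e he
    simp only [hE0, coe_image, Set.mem_image, mem_coe] at he
    obtain ⟨i, _, rfl⟩ := he
    exact edge_mem hn i
  have hE0card : E0.card = m₀ := by
    rw [hE0, Finset.card_image_of_injOn (fun a _ b _ h => edge_inj hn h), S0_card hmn]
  have hdel0 : G.deleteEdges ↑E0 = cutGraph (S0 n m₀) := rfl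
  have hγ : G.domNum = (n + 2) / 3 := domNum_cycle hn
  have hupper := cut_upper_S0 (n := n) (m₀ := m₀) hn (by omega) hmn
  have hlower := cut_lower_S0 (n := n) (m₀ := m₀) hn hm2 hmn
  have hval : (cutGraph (S0 n m₀)).domNum = (n + 2) / 3 + k := by omega
  have hmem : m₀ ∈ {m : ℕ | ∃ E' : Finset (Sym2 (Fin n)), ↑E' ⊆ G.edgeSet ∧
      (G.deleteEdges ↑E').domNum = G.domNum + k ∧ E'.card = m} :=
    ⟨E0, hE0sub, by rw [hdel0, hγ, hval], hE0card⟩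
  rw [SimpleGraph.synchBondage]
  apply le_antisymm (Nat.sInf_le hmem)
  by_contra hlt
  push_neg at hlt
  obtain ⟨E', hsub, hgam, hcardE⟩ := Nat.sInf_mem (⟨m₀, hmem⟩ : Set.Nonempty _)
  rcases Nat.eq_zero_or_pos E'.card with h0 | hpos
  · rw [Finset.card_eq_zero] at h0
    rw [h0] at hgam
    simp only [coe_empty, SimpleGraph.deleteEdges_empty] at hgam
    omega
  · set S' := (univ : Finset (Fin n)).filter (fun i : Fin n => s(i, i + 1) ∈ E') with hS'
    have hE' : E' = S'.image (fun i => s(i, i + 1)) := by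
      ext e
      simp only [hS', Finset.mem_image, mem_filter, mem_univ, true_and]
      constructor
      · intro he
        obtain ⟨i, rfl⟩ := edgeSet_cycle hn (hsub he)
        exact ⟨i, he, rfl⟩
      · rintro ⟨i, hi, rfl⟩
        exact hi
    have hScard : S'.card = E'.card := by
      have h := congrArg Finset.card hE'
      rw [Finset.card_image_of_injOn (fun a _ b _ hx => edge_inj hn hx)] at h
      exact h.symm
    have hSne : S'.Nonempty := Finset.card_pos.mp (by omega)
    have hd := domNum_le _ (domD_dominates S' hn hSne)
    have hc := domD_card S' hn hSne
    have hdel' : G.deleteEdges ↑E' = cutGraph S' := by rw [hE']; rfl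
    rw [hdel', hγ] at hgam
    have h3 := ha3 E'.card hpos (by omega)
    omega

end assembly

/-- the `k`-synchronous bondage number of the cycle `C_n`
(for `n ≥ 3`, `1 ≤ k ≤ n − ⌈n/3⌉`) is `⌊(3k−1)/2⌋ + 1`, `⌊(3k+1)/2⌋ + 1`, or
`⌈(3k−1)/2⌉ + 1 = ⌊3k/2⌋ + 1` according to whether `n ≡ 0, 1, 2 (mod 3)`. -/
theorem synchBondage_cycleGraph (n k : ℕ) (hn : 3 ≤ n) (hk : 1 ≤ k)
    (hkn : k ≤ n - (n + 2) / 3) :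
    (n % 3 = 0 → (SimpleGraph.cycleGraph n).synchBondage k = (3 * k - 1) / 2 + 1) ∧
    (n % 3 = 1 → (SimpleGraph.cycleGraph n).synchBondage k = (3 * k + 1) / 2 + 1) ∧
    (n % 3 = 2 → (SimpleGraph.cycleGraph n).synchBondage k = 3 * k / 2 + 1) := by
  haveI : NeZero n := ⟨by omega⟩
  refine ⟨fun h0 => ?_, fun h1 => ?_, fun h2 => ?_⟩
  · exact synch_eq k ((3 * k - 1) / 2 + 1) hn hk (by omega) (by omega) (by omega) (by omega)
      (fun m hm1 hm2 => by omega)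
  · exact synch_eq k ((3 * k + 1) / 2 + 1) hn hk (by omega) (by omega) (by omega) (by omega)
      (fun m hm1 hm2 => by omega)
  · exact synch_eq k (3 * k / 2 + 1) hn hk (by omega) (by omega) (by omega) (by omega)
      (fun m hm1 hm2 => by omega)
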